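/- Let 𝒰 and 𝒲 be symmetric positive semidefinite m×m matrices with 𝒲 positive definite. Then (1/2)·tr(𝒰𝒲⁻¹) ≤ tr(𝒰𝒲⁻¹) − (1/2)·log det(I + 𝒰𝒲⁻¹) ≤ tr(𝒰𝒲⁻¹) − (1/2)·log(1 + tr(𝒰𝒲⁻¹)). -/

import Mathlib

open Matrix
open scoped MatrixOrder

private lemma one_add_sum_le_prod {ι : Type*} (s : Finset ι) (f : ι → ℝ)
    (hf : ∀ i ∈ s, 0 ≤ f i) : 1 + ∑ i ∈ s, f i ≤ ∏ i ∈ s, (1 + f i) := by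
  classical
  induction s using Finset.induction_on with
  | empty => simp
  | @insert a s hnot ih =>
    rw [Finset.sum_insert hnot, Finset.prod_insert hnot]
    have ha : 0 ≤ f a := hf a (Finset.mem_insert_self a s)
    have hs : ∀ i ∈ s, 0 ≤ f i := fun i hi => hf i (Finset.mem_insert_of_mem hi)
    have h1 : (0:ℝ) ≤ ∑ i ∈ s, f i := Finset.sum_nonneg hs
    have := ih hs
    nlinarith

private lemma key {m : ℕ} {M : Matrix (Fin m) (Fin m) ℝ} (hM : M.PosSemidef) :
    Real.log (1 + M).det ≤ M.trace ∧ Real.log (1 + M.trace) ≤ Real.log (1 + M).det := by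
  set μ := hM.1.eigenvalues with hμ
  have hnn : ∀ i, 0 ≤ μ i := hM.eigenvalues_nonneg
  have hU1 : (hM.1.eigenvectorUnitary : Matrix (Fin m) (Fin m) ℝ) *
      star (hM.1.eigenvectorUnitary : Matrix (Fin m) (Fin m) ℝ) = 1 :=
    Matrix.mem_unitaryGroup_iff.mp hM.1.eigenvectorUnitary.2
  have hU2 : star (hM.1.eigenvectorUnitary : Matrix (Fin m) (Fin m) ℝ) *
      (hM.1.eigenvectorUnitary : Matrix (Fin m) (Fin m) ℝ) = 1 :=
    Matrix.mem_unitaryGroup_iff'.mp hM.1.eigenvectorUnitary.2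
  have hspec := hM.1.spectral_theorem
  have htr : M.trace = ∑ i, μ i := by
    conv_lhs => rw [hspec]
    rw [Unitary.conjStarAlgAut_apply, Matrix.trace_mul_cycle, hU2, Matrix.one_mul, Matrix.trace_diagonal]
    simp [μ]
  have hdet : (1 + M).det = ∏ i, (1 + μ i) := by
    have : (1 : Matrix (Fin m) (Fin m) ℝ) + M =
        (hM.1.eigenvectorUnitary : Matrix (Fin m) (Fin m) ℝ) *
          (1 + diagonal (RCLike.ofReal ∘ μ)) *
          star (hM.1.eigenvectorUnitary : Matrix (Fin m) (Fin m) ℝ) := by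
      rw [Matrix.mul_add, Matrix.add_mul, Matrix.mul_one, hU1]
      exact congrArg (1 + ·) hspec
    rw [this, Matrix.det_mul, Matrix.det_mul]
    have hdu : ((hM.1.eigenvectorUnitary : Matrix (Fin m) (Fin m) ℝ)).det *
        ((star (hM.1.eigenvectorUnitary : Matrix (Fin m) (Fin m) ℝ))).det = 1 := by
      rw [← Matrix.det_mul, hU1, Matrix.det_one]
    have h2 : (1 + diagonal (RCLike.ofReal ∘ μ) : Matrix (Fin m) (Fin m) ℝ).det
        = ∏ i, (1 + μ i) := by
      rw [← Matrix.diagonal_one, Matrix.diagonal_add, Matrix.det_diagonal]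
      simp
    rw [h2, mul_right_comm, hdu, one_mul]
  have hpos : ∀ i, (0:ℝ) < 1 + μ i := fun i => by linarith [hnn i]
  constructor
  · rw [hdet, Real.log_prod (fun i _ => (hpos i).ne'), htr]
    apply Finset.sum_le_sum
    intro i _
    have := Real.log_le_sub_one_of_pos (hpos i)
    linarith
  · rw [hdet, htr]
    have hnn2 : (0:ℝ) ≤ ∑ i, μ i := Finset.sum_nonneg fun i _ => hnn i
    apply Real.log_le_log (by linarith)
    exact one_add_sum_le_prod _ _ (fun i _ => hnn i)

theorem stmt_9 {m : ℕ} (scrU scrW : Matrix (Fin m) (Fin m) ℝ)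
    (hU : scrU.PosSemidef) (hW : scrW.PosDef) :
    (1 / 2) * (scrU * scrW⁻¹).trace ≤
        (scrU * scrW⁻¹).trace - (1 / 2) * Real.log (1 + scrU * scrW⁻¹).det ∧
      (scrU * scrW⁻¹).trace - (1 / 2) * Real.log (1 + scrU * scrW⁻¹).det ≤
        (scrU * scrW⁻¹).trace - (1 / 2) * Real.log (1 + (scrU * scrW⁻¹).trace) := by
  have hWinv : (scrW⁻¹).PosDef := hW.inv
  set S := CFC.sqrt (scrW⁻¹) with hSdef
  have hS : S.PosSemidef := (CFC.sqrt_nonneg _).posSemidef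
  have hSS : S * S = scrW⁻¹ := CFC.sqrt_mul_sqrt_self _ hWinv.posSemidef.nonneg
  have hSH : Sᴴ = S := hS.1
  have hM : (S * scrU * S).PosSemidef := by
    have := hU.conjTranspose_mul_mul_same S
    rwa [hSH] at this
  have htr : (scrU * scrW⁻¹).trace = (S * scrU * S).trace := by
    rw [← hSS, ← Matrix.mul_assoc, Matrix.trace_mul_comm, Matrix.mul_assoc,
      ← Matrix.mul_assoc]
  have hdet : (1 + scrU * scrW⁻¹).det = (1 + S * scrU * S).det := by
    rw [← hSS, ← Matrix.mul_assoc, Matrix.det_one_add_mul_comm, ← Matrix.mul_assoc]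
  obtain ⟨h1, h2⟩ := key hM
  constructor
  · rw [htr, hdet]; linarith
  · rw [htr, hdet]
    have : Real.log (1 + (S * scrU * S).trace) ≤ Real.log (1 + S * scrU * S).det := h2
    linarith
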